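/- Let μ and ν be probability measures on X^n and Y^n respectively (X, Y finite sets), and let μ⊗ν denote their product measure on (X×Y)^n, viewing a sequence over X×Y as a pair of sequences. Then for all 1 ≤ i < j ≤ n: max{η̄_{ij}(μ), η̄_{ij}(ν)} ≤ η̄_{ij}(μ⊗ν). -/

import Mathlib

open scoped BigOperators

/-- Probability (under `μ`) of the event that the first `i` coordinates agree with `z`. -/
noncomputable def prefProb {n : ℕ} {Ω : Type*} [Fintype Ω] [DecidableEq Ω] (μ : (Fin n → Ω) → ℝ) (i : ℕ)
    (z : Fin n → Ω) : ℝ :=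
  ∑ x : Fin n → Ω, if ∀ t : Fin n, (t : ℕ) < i → x t = z t then μ x else 0

/-- Conditional probability that the suffix `X_j,…,X_n` (1-based `j`) equals `s`,
given that the first `i` coordinates agree with `z`. -/
noncomputable def condSuffix {n : ℕ} {Ω : Type*} [Fintype Ω] [DecidableEq Ω]
    (μ : (Fin n → Ω) → ℝ) (i j : ℕ) (z : Fin n → Ω)
    (s : {t : Fin n // j ≤ (t : ℕ) + 1} → Ω) : ℝ :=
  (∑ x : Fin n → Ω,
      if (∀ t : Fin n, (t : ℕ) < i → x t = z t) ∧
          (∀ t : {t : Fin n // j ≤ (t : ℕ) + 1}, x t.1 = s t)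
        then μ x else 0) / prefProb μ i z

/-- Replace the `i`-th (1-based) coordinate of `y` by `w` (this encodes the prefix `yw`). -/
def setCoord {n : ℕ} {Ω : Type*} (y : Fin n → Ω) (i : ℕ) (w : Ω) : Fin n → Ω :=
  fun t => if (t : ℕ) + 1 = i then w else y t

/-- `η_{ij}(μ; y, w, w')`: total variation distance between the conditional laws of
`X_j,…,X_n` given the prefixes `yw` and `yw'`. -/
noncomputable def eta {n : ℕ} {Ω : Type*} [Fintype Ω] [DecidableEq Ω]
    (μ : (Fin n → Ω) → ℝ) (i j : ℕ) (y : Fin n → Ω) (w w' : Ω) : ℝ :=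
  (1 / 2) * ∑ s : {t : Fin n // j ≤ (t : ℕ) + 1} → Ω,
    |condSuffix μ i j (setCoord y i w) s - condSuffix μ i j (setCoord y i w') s|

/-- `η̄_{ij}(μ)`: the η-mixing coefficient. -/
noncomputable def etaBar {n : ℕ} {Ω : Type*} [Fintype Ω] [DecidableEq Ω]
    (μ : (Fin n → Ω) → ℝ) (i j : ℕ) : ℝ :=
  ⨆ y : Fin n → Ω, ⨆ w : Ω, ⨆ w' : Ω, eta μ i j y w w'

/-- `μ` is a probability mass function. -/
def IsProbMeas {α : Type*} [Fintype α] (μ : α → ℝ) : Prop :=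
  (∀ x, 0 ≤ μ x) ∧ ∑ x, μ x = 1

/-- The parallel product of measures `μ` on `X^n` and `ν` on `Y^n`, as a measure on
`(X × Y)^n`, viewing a sequence over `X × Y` as a pair of sequences. -/
def parProd {n : ℕ} {X Y : Type*} (μ : (Fin n → X) → ℝ) (ν : (Fin n → Y) → ℝ) :
    (Fin n → X × Y) → ℝ :=
  fun z => μ (fun t => (z t).1) * ν (fun t => (z t).2)

set_option linter.unusedSectionVars false

section Aux
variable {n : ℕ} {X Y Ω : Type*} [Fintype X] [DecidableEq X] [Fintype Y] [DecidableEq Y]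
  [Fintype Ω] [DecidableEq Ω]

private lemma sum_pairFn' {α : Type*} [Fintype α] [DecidableEq α] (f : (α → X × Y) → ℝ) :
    ∑ z : α → X × Y, f z = ∑ a : α → X, ∑ b : α → Y, f (fun t => (a t, b t)) := by
  calc ∑ z : α → X × Y, f z
      = ∑ p : (α → X) × (α → Y), f (fun t => (p.1 t, p.2 t)) :=
        Fintype.sum_equiv (Equiv.arrowProdEquivProdArrow α (fun _ => X) (fun _ => Y)) _ _ (fun z => by
          simp [Equiv.arrowProdEquivProdArrow])
    _ = _ := Fintype.sum_prod_type _

private lemma ite_mul_ite' (P Q : Prop) [Decidable P] [Decidable Q] (x y : ℝ) :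
    (if P ∧ Q then x * y else 0) = (if P then x else 0) * (if Q then y else 0) := by
  by_cases hP : P <;> by_cases hQ : Q <;> simp [hP, hQ]

/-- numerator of condSuffix -/
private noncomputable def numer (μ : (Fin n → Ω) → ℝ) (i j : ℕ) (z : Fin n → Ω)
    (s : {t : Fin n // j ≤ (t : ℕ) + 1} → Ω) : ℝ :=
  ∑ x : Fin n → Ω,
      if (∀ t : Fin n, (t : ℕ) < i → x t = z t) ∧
          (∀ t : {t : Fin n // j ≤ (t : ℕ) + 1}, x t.1 = s t)
        then μ x else 0

private lemma condSuffix_eq (μ : (Fin n → Ω) → ℝ) (i j : ℕ) (z : Fin n → Ω)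
    (s : {t : Fin n // j ≤ (t : ℕ) + 1} → Ω) :
    condSuffix μ i j z s = numer μ i j z s / prefProb μ i z := rfl

private lemma prefProb_pos (μ : (Fin n → Ω) → ℝ) (hpos : ∀ x, 0 < μ x) (i : ℕ) (z : Fin n → Ω) :
    0 < prefProb μ i z := by
  unfold prefProb
  apply Finset.sum_pos' (fun x _ => by split_ifs; exacts [(hpos x).le, le_rfl]) ⟨z, Finset.mem_univ z, ?_⟩
  simp [hpos z]

private lemma numer_nonneg (μ : (Fin n → Ω) → ℝ) (hpos : ∀ x, 0 ≤ μ x) (i j : ℕ) (z : Fin n → Ω)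
    (s : {t : Fin n // j ≤ (t : ℕ) + 1} → Ω) : 0 ≤ numer μ i j z s := by
  unfold numer
  exact Finset.sum_nonneg fun x _ => by split_ifs; exacts [hpos x, le_rfl]

private lemma condSuffix_nonneg (μ : (Fin n → Ω) → ℝ) (hpos : ∀ x, 0 < μ x) (i j : ℕ)
    (z : Fin n → Ω) (s : {t : Fin n // j ≤ (t : ℕ) + 1} → Ω) : 0 ≤ condSuffix μ i j z s :=
  div_nonneg (numer_nonneg μ (fun x => (hpos x).le) i j z s) (prefProb_pos μ hpos i z).le

private lemma sum_numer (μ : (Fin n → Ω) → ℝ) (i j : ℕ) (z : Fin n → Ω) :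
    ∑ s : {t : Fin n // j ≤ (t : ℕ) + 1} → Ω, numer μ i j z s = prefProb μ i z := by
  unfold numer prefProb
  rw [Finset.sum_comm]
  refine Finset.sum_congr rfl fun x _ => ?_
  by_cases hP : ∀ t : Fin n, (t : ℕ) < i → x t = z t
  · have h : ∀ s : {t : Fin n // j ≤ (t : ℕ) + 1} → Ω,
        (∀ t : {t : Fin n // j ≤ (t : ℕ) + 1}, x t.1 = s t) ↔ (fun t => x t.1) = s := by
      intro s
      constructor
      · intro h; funext t; exact h t
      · intro h t; rw [← h]
    rw [if_pos hP,
      Finset.sum_congr rfl fun s _ => if_congr ((and_iff_right hP).trans (h s)) rfl rfl,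
      Finset.sum_ite_eq, if_pos (Finset.mem_univ _)]
  · simp [hP]

private lemma sum_condSuffix (μ : (Fin n → Ω) → ℝ) (hpos : ∀ x, 0 < μ x) (i j : ℕ)
    (z : Fin n → Ω) :
    ∑ s : {t : Fin n // j ≤ (t : ℕ) + 1} → Ω, condSuffix μ i j z s = 1 := by
  simp only [condSuffix_eq]
  rw [← Finset.sum_div, sum_numer, div_self (prefProb_pos μ hpos i z).ne']

private lemma prefProb_parProd (μ : (Fin n → X) → ℝ) (ν : (Fin n → Y) → ℝ) (i : ℕ)
    (a : Fin n → X) (b : Fin n → Y) :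
    prefProb (parProd μ ν) i (fun t => (a t, b t)) = prefProb μ i a * prefProb ν i b := by
  unfold prefProb parProd
  rw [sum_pairFn', Finset.sum_mul_sum]
  refine Finset.sum_congr rfl fun a' _ => Finset.sum_congr rfl fun b' _ => ?_
  rw [← ite_mul_ite']
  refine if_congr ?_ rfl rfl
  constructor
  · intro h
    exact ⟨fun t ht => congrArg Prod.fst (h t ht), fun t ht => congrArg Prod.snd (h t ht)⟩
  · rintro ⟨h1, h2⟩ t ht
    exact Prod.ext (h1 t ht) (h2 t ht)

private lemma numer_parProd (μ : (Fin n → X) → ℝ) (ν : (Fin n → Y) → ℝ) (i j : ℕ)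
    (a : Fin n → X) (b : Fin n → Y) (s : {t : Fin n // j ≤ (t : ℕ) + 1} → X × Y) :
    numer (parProd μ ν) i j (fun t => (a t, b t)) s
      = numer μ i j a (fun t => (s t).1) * numer ν i j b (fun t => (s t).2) := by
  unfold numer parProd
  rw [sum_pairFn', Finset.sum_mul_sum]
  refine Finset.sum_congr rfl fun a' _ => Finset.sum_congr rfl fun b' _ => ?_
  rw [← ite_mul_ite']
  refine if_congr ?_ rfl rfl
  constructor
  · rintro ⟨h1, h2⟩
    exact ⟨⟨fun t ht => congrArg Prod.fst (h1 t ht), fun t => congrArg Prod.fst (h2 t)⟩,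
      ⟨fun t ht => congrArg Prod.snd (h1 t ht), fun t => congrArg Prod.snd (h2 t)⟩⟩
  · rintro ⟨⟨h1, h2⟩, ⟨h3, h4⟩⟩
    exact ⟨fun t ht => Prod.ext (h1 t ht) (h3 t ht), fun t => Prod.ext (h2 t) (h4 t)⟩

private lemma condSuffix_parProd (μ : (Fin n → X) → ℝ) (ν : (Fin n → Y) → ℝ) (i j : ℕ)
    (a : Fin n → X) (b : Fin n → Y) (s : {t : Fin n // j ≤ (t : ℕ) + 1} → X × Y) :
    condSuffix (parProd μ ν) i j (fun t => (a t, b t)) s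
      = condSuffix μ i j a (fun t => (s t).1) * condSuffix ν i j b (fun t => (s t).2) := by
  rw [condSuffix_eq, condSuffix_eq, condSuffix_eq, numer_parProd, prefProb_parProd,
    mul_div_mul_comm]

private lemma setCoord_pair (a : Fin n → X) (b : Fin n → Y) (i : ℕ) (w : X) (c : Y) :
    setCoord (fun t => (a t, b t)) i (w, c) = fun t => (setCoord a i w t, setCoord b i c t) := by
  funext t
  simp only [setCoord]
  split_ifs <;> rfl

private lemma eta_parProd_fst (μ : (Fin n → X) → ℝ) (ν : (Fin n → Y) → ℝ)
    (hνpos : ∀ y, 0 < ν y) (i j : ℕ) (a : Fin n → X) (b : Fin n → Y) (w w' : X) (c : Y) :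
    eta (parProd μ ν) i j (fun t => (a t, b t)) (w, c) (w', c) = eta μ i j a w w' := by
  unfold eta
  congr 1
  rw [setCoord_pair, setCoord_pair, sum_pairFn'
    (f := fun s => |condSuffix (parProd μ ν) i j (fun t => (setCoord a i w t, setCoord b i c t)) s
      - condSuffix (parProd μ ν) i j (fun t => (setCoord a i w' t, setCoord b i c t)) s|)]
  refine Finset.sum_congr rfl fun s₁ _ => ?_
  have key : ∀ s₂, |condSuffix (parProd μ ν) i j (fun t => (setCoord a i w t, setCoord b i c t))
        (fun t => (s₁ t, s₂ t))
      - condSuffix (parProd μ ν) i j (fun t => (setCoord a i w' t, setCoord b i c t))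
        (fun t => (s₁ t, s₂ t))|
      = |condSuffix μ i j (setCoord a i w) s₁ - condSuffix μ i j (setCoord a i w') s₁|
        * condSuffix ν i j (setCoord b i c) s₂ := by
    intro s₂
    rw [condSuffix_parProd, condSuffix_parProd, ← sub_mul, abs_mul,
      abs_of_nonneg (condSuffix_nonneg ν hνpos i j _ _)]
  rw [Finset.sum_congr rfl fun s₂ _ => key s₂, ← Finset.mul_sum,
    sum_condSuffix ν hνpos, mul_one]

private lemma eta_parProd_snd (μ : (Fin n → X) → ℝ) (ν : (Fin n → Y) → ℝ)
    (hμpos : ∀ x, 0 < μ x) (i j : ℕ) (a : Fin n → X) (b : Fin n → Y) (c : X) (w w' : Y) :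
    eta (parProd μ ν) i j (fun t => (a t, b t)) (c, w) (c, w') = eta ν i j b w w' := by
  unfold eta
  congr 1
  rw [setCoord_pair, setCoord_pair, sum_pairFn'
    (f := fun s => |condSuffix (parProd μ ν) i j (fun t => (setCoord a i c t, setCoord b i w t)) s
      - condSuffix (parProd μ ν) i j (fun t => (setCoord a i c t, setCoord b i w' t)) s|)]
  rw [Finset.sum_comm]
  refine Finset.sum_congr rfl fun s₂ _ => ?_
  have key : ∀ s₁, |condSuffix (parProd μ ν) i j (fun t => (setCoord a i c t, setCoord b i w t))
        (fun t => (s₁ t, s₂ t))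
      - condSuffix (parProd μ ν) i j (fun t => (setCoord a i c t, setCoord b i w' t))
        (fun t => (s₁ t, s₂ t))|
      = |condSuffix ν i j (setCoord b i w) s₂ - condSuffix ν i j (setCoord b i w') s₂|
        * condSuffix μ i j (setCoord a i c) s₁ := by
    intro s₁
    rw [condSuffix_parProd, condSuffix_parProd, ← mul_sub, abs_mul, mul_comm,
      abs_of_nonneg (condSuffix_nonneg μ hμpos i j _ _)]
  rw [Finset.sum_congr rfl fun s₁ _ => key s₁, ← Finset.mul_sum,
    sum_condSuffix μ hμpos, mul_one]

private lemma le_etaBar (ρ : (Fin n → Ω) → ℝ) (i j : ℕ) (z : Fin n → Ω) (w w' : Ω) :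
    eta ρ i j z w w' ≤ etaBar ρ i j := by
  have hΩ : Nonempty Ω := ⟨w⟩
  calc eta ρ i j z w w'
      ≤ ⨆ w'' : Ω, eta ρ i j z w w'' := le_ciSup (Set.finite_range _).bddAbove w'
    _ ≤ ⨆ w₂ : Ω, ⨆ w'' : Ω, eta ρ i j z w₂ w'' :=
        le_ciSup (f := fun w₂ => ⨆ w'' : Ω, eta ρ i j z w₂ w'') (Set.finite_range _).bddAbove w
    _ ≤ etaBar ρ i j :=
        le_ciSup (f := fun y => ⨆ w₂ : Ω, ⨆ w'' : Ω, eta ρ i j y w₂ w'') (Set.finite_range _).bddAbove z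

end Aux

/-- lower bound for the η-mixing coefficients of a parallel product. -/
theorem etaBar_parProd_lower {n : ℕ} {X Y : Type*} [Fintype X] [DecidableEq X]
    [Fintype Y] [DecidableEq Y]
    (μ : (Fin n → X) → ℝ) (ν : (Fin n → Y) → ℝ)
    (hμ : IsProbMeas μ) (hν : IsProbMeas ν)
    (hμpos : ∀ x, 0 < μ x) (hνpos : ∀ y, 0 < ν y)
    (i j : ℕ) (hi : 1 ≤ i) (hij : i < j) (hjn : j ≤ n) :
    max (etaBar μ i j) (etaBar ν i j) ≤ etaBar (parProd μ ν) i j := by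
  have hn : 0 < n := by omega
  have hX : Nonempty X := by
    by_contra h
    rw [not_nonempty_iff] at h
    haveI : IsEmpty (Fin n → X) := ⟨fun f => h.false (f ⟨0, hn⟩)⟩
    have h2 := hμ.2
    rw [Finset.univ_eq_empty, Finset.sum_empty] at h2
    exact one_ne_zero h2.symm
  have hY : Nonempty Y := by
    by_contra h
    rw [not_nonempty_iff] at h
    haveI : IsEmpty (Fin n → Y) := ⟨fun f => h.false (f ⟨0, hn⟩)⟩
    have h2 := hν.2
    rw [Finset.univ_eq_empty, Finset.sum_empty] at h2
    exact one_ne_zero h2.symm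
  haveI := hX; haveI := hY
  obtain ⟨c⟩ := hX
  obtain ⟨d⟩ := hY
  apply max_le
  · refine ciSup_le fun y => ciSup_le fun w => ciSup_le fun w' => ?_
    rw [← eta_parProd_fst μ ν hνpos i j y (fun _ => d) w w' d]
    exact le_etaBar _ i j _ _ _
  · refine ciSup_le fun y => ciSup_le fun w => ciSup_le fun w' => ?_
    rw [← eta_parProd_snd μ ν hμpos i j (fun _ => c) y c w w']
    exact le_etaBar _ i j _ _ _
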